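/- arXiv:2111.10691 — 4 statements merged into one kernel-verified Lean document; each statement's English description precedes it below -/
import Mathlib

section
/- Let α ∈ P be a Laurent polynomial that is not a constant, and let b ∈ ℂ with b ≠ 1/2. Then the only invariant pairs for M_{α,b} are ({0},{0}) and (P,P); i.e., M_{α,b} is an irreducible module over the N=1 Ramond algebra. -/
/- STATEMENT 5: For α ∈ ℂ[t,t⁻¹] non-constant and b ≠ 1/2, the module M_{α,b} over the
N=1 Ramond algebra is irreducible: the only invariant pairs are ({0},{0}) and (P,P). -/

open LaurentPolynomial

noncomputable section

abbrev Lp := LaurentPolynomial ℂ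

/-- `L_m(f,g) = (t^m(α+D+mb)f, t^m(α+D+m(b+1/2))g)` -/
def Lop (D : Lp →ₗ[ℂ] Lp) (α : Lp) (b : ℂ) (m : ℤ) : Lp × Lp → Lp × Lp :=
  fun w => (T m * (α * w.1 + D w.1 + ((m : ℂ) * b) • w.1),
            T m * (α * w.2 + D w.2 + ((m : ℂ) * (b + 1 / 2)) • w.2))

/-- `G_m(f,g) = (−t^m g, t^m(α+D+2mb)f)` -/
def Gop (D : Lp →ₗ[ℂ] Lp) (α : Lp) (b : ℂ) (m : ℤ) : Lp × Lp → Lp × Lp :=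
  fun w => (-(T m * w.2), T m * (α * w.1 + D w.1 + (2 * (m : ℂ) * b) • w.1))

/-- `(S₀, S₁)` is an invariant pair for `M_{α,b}`: `S₀ × S₁` is stable under all
operators `L_m` and `G_m`. -/
def RInv (D : Lp →ₗ[ℂ] Lp) (α : Lp) (b : ℂ) (S₀ S₁ : Submodule ℂ Lp) : Prop :=
  ∀ m : ℤ, ∀ f ∈ S₀, ∀ g ∈ S₁,
    (Lop D α b m (f, g)).1 ∈ S₀ ∧ (Lop D α b m (f, g)).2 ∈ S₁ ∧
    (Gop D α b m (f, g)).1 ∈ S₀ ∧ (Gop D α b m (f, g)).2 ∈ S₁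

/-! ### Auxiliary lemmas -/

lemma csmul (r : ℂ) (x : Lp) : r • x = C r * x := by
  rw [C_eq_algebraMap]; exact Algebra.smul_def r x

lemma Tco (k : ℤ) (g : Lp) (n : ℤ) : (T k * g : Lp).coeff n = g.coeff (n - k) := by
  have h : (T k : Lp) = AddMonoidAlgebra.single k 1 := rfl
  rw [h, AddMonoidAlgebra.coeff_single_mul_apply, one_mul, neg_add_eq_sub]

lemma T_mul_cancel {m : ℤ} {x : Lp} (h : T m * x = 0) : x = 0 := by
  have hx : x = T (-m) * (T m * x) := by
    rw [← mul_assoc, ← T_add, neg_add_cancel, T_zero, one_mul]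
  rw [hx, h, mul_zero]

lemma coeffD (D : Lp →ₗ[ℂ] Lp) (hD : ∀ n : ℤ, D (T n) = (n : ℂ) • T n)
    (g : Lp) (n : ℤ) : (D g).coeff n = (n : ℂ) * g.coeff n := by
  induction g using LaurentPolynomial.induction_on' with
  | add p q hp hq =>
      rw [map_add, AddMonoidAlgebra.coeff_add, Finsupp.add_apply, AddMonoidAlgebra.coeff_add,
        Finsupp.add_apply, hp, hq]; ring
  | C_mul_T k a =>
      rw [← csmul, map_smul, hD]
      simp only [AddMonoidAlgebra.coeff_smul_apply, smul_eq_mul, T_apply]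
      by_cases h : k = n <;> simp [h] <;> ring

lemma DT (D : Lp →ₗ[ℂ] Lp) (hD : ∀ n : ℤ, D (T n) = (n : ℂ) • T n)
    (k : ℤ) (g : Lp) : D (T k * g) = T k * D g + (k : ℂ) • (T k * g) := by
  apply LaurentPolynomial.ext; intro n
  rw [coeffD D hD, Tco, AddMonoidAlgebra.coeff_add, Finsupp.add_apply,
    AddMonoidAlgebra.coeff_smul_apply, Tco, coeffD D hD,
    smul_eq_mul, Tco]
  push_cast; ring

lemma coeff_mul_max (p q : Lp) {N M : ℤ} (hN : ∀ a ∈ p.coeff.support, a ≤ N)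
    (hM : ∀ b ∈ q.coeff.support, b ≤ M) : (p * q : Lp).coeff (N + M) = p.coeff N * q.coeff M := by
  classical
  rw [AddMonoidAlgebra.coeff_mul, Finsupp.sum, Finset.sum_eq_single N]
  · rw [Finsupp.sum, Finset.sum_eq_single M]
    · rw [if_pos rfl]
    · intro b hb hbM
      exact if_neg (by have := hM b hb; omega)
    · intro hM'
      rw [if_pos rfl, Finsupp.notMem_support_iff.1 hM', mul_zero]
  · intro a ha haN
    refine Finset.sum_eq_zero fun b hb => ?_
    exact if_neg (by have := hN a ha; have := hM b hb; omega)
  · intro hN'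
    refine Finset.sum_eq_zero fun b _ => ?_
    simp [Finsupp.notMem_support_iff.1 hN']

lemma coeff_mul_min (p q : Lp) {N M : ℤ} (hN : ∀ a ∈ p.coeff.support, N ≤ a)
    (hM : ∀ b ∈ q.coeff.support, M ≤ b) : (p * q : Lp).coeff (N + M) = p.coeff N * q.coeff M := by
  classical
  rw [AddMonoidAlgebra.coeff_mul, Finsupp.sum, Finset.sum_eq_single N]
  · rw [Finsupp.sum, Finset.sum_eq_single M]
    · rw [if_pos rfl]
    · intro b hb hbM
      exact if_neg (by have := hM b hb; omega)
    · intro hM'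
      rw [if_pos rfl, Finsupp.notMem_support_iff.1 hM', mul_zero]
  · intro a ha haN
    refine Finset.sum_eq_zero fun b hb => ?_
    exact if_neg (by have := hN a ha; have := hM b hb; omega)
  · intro hN'
    refine Finset.sum_eq_zero fun b _ => ?_
    simp [Finsupp.notMem_support_iff.1 hN']

/-- If `α` is not constant then `(α + D)` kills no nonzero element. -/
lemma noAnn (D : Lp →ₗ[ℂ] Lp) (hD : ∀ n : ℤ, D (T n) = (n : ℂ) • T n)
    (α : Lp) (hα : ∀ c : ℂ, α ≠ C c) {f : Lp} (h : α * f + D f = 0) : f = 0 := by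
  by_contra hf
  have hα0 : α ≠ 0 := fun h0 => hα 0 (by simpa using h0)
  have hαs : α.coeff.support.Nonempty :=
    Finsupp.support_nonempty_iff.2 (mt AddMonoidAlgebra.coeff_eq_zero.1 hα0)
  have hfs : f.coeff.support.Nonempty :=
    Finsupp.support_nonempty_iff.2 (mt AddMonoidAlgebra.coeff_eq_zero.1 hf)
  set Q := α.coeff.support.max' hαs with hQ
  set N := f.coeff.support.max' hfs with hN
  set q := α.coeff.support.min' hαs with hq
  set n0 := f.coeff.support.min' hfs with hn0
  have hmul : α * f = - D f := by
    rw [eq_neg_iff_add_eq_zero]; exact h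
  have key : ∀ m : ℤ, (α * f : Lp).coeff m = -((m : ℂ) * f.coeff m) := fun m => by
    rw [hmul, AddMonoidAlgebra.coeff_neg, Finsupp.neg_apply, coeffD D hD]
  have h1 : (α * f : Lp).coeff (Q + N) = α.coeff Q * f.coeff N :=
    coeff_mul_max α f (fun a ha => Finset.le_max' _ a ha) (fun b hb => Finset.le_max' _ b hb)
  have h2 : α.coeff Q * f.coeff N ≠ 0 :=
    mul_ne_zero (Finsupp.mem_support_iff.1 (Finset.max'_mem _ hαs))
      (Finsupp.mem_support_iff.1 (Finset.max'_mem _ hfs))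
  have h3 : f.coeff (Q + N) ≠ 0 := by
    intro h0
    have hk := key (Q + N)
    rw [h0, mul_zero, neg_zero, h1] at hk
    exact h2 hk
  have hQ0 : Q ≤ 0 := by
    have := Finset.le_max' _ _ (Finsupp.mem_support_iff.2 h3)
    omega
  have h1' : (α * f : Lp).coeff (q + n0) = α.coeff q * f.coeff n0 :=
    coeff_mul_min α f (fun a ha => Finset.min'_le _ a ha) (fun b hb => Finset.min'_le _ b hb)
  have h2' : α.coeff q * f.coeff n0 ≠ 0 :=
    mul_ne_zero (Finsupp.mem_support_iff.1 (Finset.min'_mem _ hαs))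
      (Finsupp.mem_support_iff.1 (Finset.min'_mem _ hfs))
  have h3' : f.coeff (q + n0) ≠ 0 := by
    intro h0
    have hk := key (q + n0)
    rw [h0, mul_zero, neg_zero, h1'] at hk
    exact h2' hk
  have hq0 : 0 ≤ q := by
    have := Finset.min'_le _ _ (Finsupp.mem_support_iff.2 h3')
    omega
  have hsub : α.coeff.support ⊆ {0} := by
    intro n hn
    have := Finset.le_max' _ n hn
    have := Finset.min'_le _ n hn
    simp only [Finset.mem_singleton]
    omega
  exact hα (α.coeff 0) (by
    ext n
    have e := congrArg (· n) (Finsupp.support_subset_singleton.1 hsub)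
    simp only [Finsupp.single_apply] at e
    rw [C_apply, e]
    by_cases hn : n = 0 <;> simp [hn, eq_comm])

theorem stmt5 (D : Lp →ₗ[ℂ] Lp)
    (hD : ∀ n : ℤ, D (T n) = (n : ℂ) • T n)
    (α : Lp) (hα : ∀ c : ℂ, α ≠ C c) (b : ℂ) (hb : b ≠ 1 / 2) :
    ∀ S₀ S₁ : Submodule ℂ Lp, RInv D α b S₀ S₁ →
      (S₀ = ⊥ ∧ S₁ = ⊥) ∨ (S₀ = ⊤ ∧ S₁ = ⊤) := by
  intro S₀ S₁ hInv
  by_cases hS1 : S₁ = ⊥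
  · -- if the odd part is zero, so is the even part
    left
    refine ⟨?_, hS1⟩
    rw [eq_bot_iff]
    intro f hf
    simp only [Submodule.mem_bot]
    have hm : ∀ m : ℤ, α * f + D f + (2 * (m : ℂ) * b) • f = 0 := by
      intro m
      have h := (hInv m f hf 0 S₁.zero_mem).2.2.2
      simp only [Gop, hS1, Submodule.mem_bot] at h
      exact T_mul_cancel h
    have h0 : α * f + D f = 0 := by
      have := hm 0
      simpa using this
    have h1 : α * f + D f + ((2 : ℂ) * b) • f = 0 := by
      have := hm 1
      rw [show (2 * ((1 : ℤ) : ℂ) * b) = (2 : ℂ) * b by push_cast; ring] at this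
      exact this
    have hbs : ((2 : ℂ) * b) • f = 0 := by
      have e := congrArg₂ (· - ·) h1 h0
      simpa [add_sub_cancel_left] using e
    by_cases hb0 : b = 0
    · subst hb0
      exact noAnn D hD α hα h0
    · have h2b : (2 : ℂ) * b ≠ 0 := mul_ne_zero two_ne_zero hb0
      exact (smul_eq_zero.1 hbs).resolve_left h2b
  · -- the odd part is nonzero: everything is everything
    right
    have memS0 : ∀ g ∈ S₁, ∀ k : ℤ, (T k : Lp) * g ∈ S₀ := by
      intro g hg k
      have h := (hInv k 0 S₀.zero_mem g hg).2.2.1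
      simp only [Gop] at h
      simpa using S₀.neg_mem h
    have G0 : ∀ f ∈ S₀, α * f + D f ∈ S₁ := by
      intro f hf
      have h := (hInv 0 f hf 0 S₁.zero_mem).2.2.2
      simpa [Gop] using h
    have Cfact : ∀ g ∈ S₁, ∀ m : ℤ, (T m : Lp) * (α * g + D g + (m : ℂ) • g) ∈ S₁ := by
      intro g hg m
      have h := G0 _ (memS0 g hg m)
      have e : α * (T m * g) + D (T m * g) = T m * (α * g + D g + (m : ℂ) • g) := by
        rw [DT D hD, csmul, csmul]; ring
      rwa [e] at h
    have Lfact : ∀ g ∈ S₁, ∀ m : ℤ,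
        (T m : Lp) * (α * g + D g + ((m : ℂ) * (b + 1 / 2)) • g) ∈ S₁ := by
      intro g hg m
      have h := (hInv m 0 S₀.zero_mem g hg).2.1
      simpa only [Lop] using h
    have Tmem : ∀ g ∈ S₁, ∀ m : ℤ, (T m : Lp) * g ∈ S₁ := by
      intro g hg m
      rcases eq_or_ne m 0 with rfl | hmne
      · simpa [T_zero] using hg
      · have h3 := S₁.sub_mem (Lfact g hg m) (Cfact g hg m)
        have e : T m * (α * g + D g + ((m : ℂ) * (b + 1 / 2)) • g)
            - T m * (α * g + D g + (m : ℂ) • g)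
            = ((m : ℂ) * (b + 1 / 2) - m) • ((T m : Lp) * g) := by
          rw [csmul, csmul, csmul, map_sub]; ring
        rw [e] at h3
        have hc : (m : ℂ) * (b + 1 / 2) - m ≠ 0 := by
          have he : (m : ℂ) * (b + 1 / 2) - m = (m : ℂ) * (b - 1 / 2) := by ring
          rw [he]
          exact mul_ne_zero (Int.cast_ne_zero.2 hmne) (sub_ne_zero.2 hb)
        have := S₁.smul_mem ((m : ℂ) * (b + 1 / 2) - m)⁻¹ h3
        rwa [inv_smul_smul₀ hc] at this
    have mulmem : ∀ p : Lp, ∀ g ∈ S₁, p * g ∈ S₁ := by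
      intro p
      induction p using LaurentPolynomial.induction_on' with
      | add p q hp hq =>
          intro g hg
          rw [add_mul]
          exact S₁.add_mem (hp g hg) (hq g hg)
      | C_mul_T k a =>
          intro g hg
          rw [mul_assoc, ← csmul]
          exact S₁.smul_mem a (Tmem g hg k)
    have Dmem : ∀ g ∈ S₁, D g ∈ S₁ := by
      intro g hg
      have h1 := G0 g (by simpa using memS0 g hg 0)
      have := S₁.sub_mem h1 (mulmem α g hg)
      simpa [add_sub_cancel_left] using this
    obtain ⟨g₀, hg₀S, hg₀⟩ := (Submodule.ne_bot_iff S₁).1 hS1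
    have key : ∀ Nc : ℕ, ∀ g : Lp, g ∈ S₁ → g ≠ 0 → g.coeff.support.card ≤ Nc →
        ∃ k : ℤ, (T k : Lp) ∈ S₁ := by
      intro Nc
      induction Nc with
      | zero =>
          intro g _ hg0 hc
          exact absurd (Finsupp.support_nonempty_iff.2 (mt AddMonoidAlgebra.coeff_eq_zero.1 hg0)).card_pos (by omega)
      | succ Nc ih =>
          intro g hgS hg0 hc
          have hne : g.coeff.support.Nonempty :=
            Finsupp.support_nonempty_iff.2 (mt AddMonoidAlgebra.coeff_eq_zero.1 hg0)
          obtain ⟨k, hk⟩ := hne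
          by_cases hone : g.coeff.support.card = 1
          · refine ⟨k, ?_⟩
            have hsub : g.coeff.support ⊆ {k} := by
              rw [Finset.card_eq_one] at hone
              obtain ⟨a, ha⟩ := hone
              rw [ha] at hk ⊢
              simp only [Finset.mem_singleton] at hk
              simp [hk]
            set c := g.coeff k with hc
            have hck : c ≠ 0 := Finsupp.mem_support_iff.1 hk
            have hrep : g = c • (T k : Lp) := by
              have h1 : g.coeff = Finsupp.single k c :=
                Finsupp.support_subset_singleton.1 hsub
              have h2 : (c • (T k : Lp)).coeff = Finsupp.single k c := by
                show c • Finsupp.single k (1 : ℂ) = Finsupp.single k c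
                rw [Finsupp.smul_single', mul_one]
              exact AddMonoidAlgebra.coeff_injective (h1.trans h2.symm)
            have hmem := S₁.smul_mem c⁻¹ hgS
            rwa [show c⁻¹ • g = (T k : Lp) by rw [hrep, inv_smul_smul₀ hck]] at hmem
          · set h := D g - (k : ℂ) • g with hh
            have hhS : h ∈ S₁ := S₁.sub_mem (Dmem g hgS) (S₁.smul_mem _ hgS)
            have hco : ∀ n : ℤ, h.coeff n = ((n : ℂ) - k) * g.coeff n := by
              intro n
              rw [hh, AddMonoidAlgebra.coeff_sub, Finsupp.sub_apply, AddMonoidAlgebra.coeff_smul_apply,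
                coeffD D hD, smul_eq_mul]
              ring
            have hsupp : h.coeff.support = g.coeff.support.erase k := by
              ext n
              simp only [Finsupp.mem_support_iff, Finset.mem_erase, hco]
              constructor
              · intro hn
                have hgn : g.coeff n ≠ 0 := fun h0 => hn (by rw [h0, mul_zero])
                have hnk : (n : ℂ) - k ≠ 0 := fun h0 => hn (by rw [h0, zero_mul])
                refine ⟨fun hnk' => hnk (by rw [hnk']; ring), hgn⟩
              · rintro ⟨hnk, hgn⟩
                refine mul_ne_zero ?_ hgn
                rw [sub_ne_zero]
                exact_mod_cast hnk
            have hcard2 : 2 ≤ g.coeff.support.card := by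
              have := Finset.card_pos.2
                (Finsupp.support_nonempty_iff.2 (mt AddMonoidAlgebra.coeff_eq_zero.1 hg0))
              omega
            obtain ⟨l, hl, hlk⟩ := Finset.exists_mem_ne (s := g.coeff.support) (by omega) k
            have hh0 : h ≠ 0 := by
              intro h0
              have hmem : l ∈ h.coeff.support := by
                rw [hsupp]; exact Finset.mem_erase.2 ⟨hlk, hl⟩
              rw [h0] at hmem
              simp at hmem
            have hcard : h.coeff.support.card ≤ Nc := by
              rw [hsupp, Finset.card_erase_of_mem hk]
              omega
            exact ih h hhS hh0 hcard
    obtain ⟨k, hTk⟩ := key g₀.coeff.support.card g₀ hg₀S hg₀ le_rfl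
    have hS1top : S₁ = ⊤ := by
      rw [eq_top_iff]
      intro p _
      have := mulmem (p * T (-k)) _ hTk
      rwa [mul_assoc, ← T_add, neg_add_cancel, T_zero, mul_one] at this
    refine ⟨?_, hS1top⟩
    rw [eq_top_iff]
    intro p _
    have hp : p ∈ S₁ := by rw [hS1top]; trivial
    have := memS0 p hp 0
    simpa [T_zero] using this

end
end

section
/- Let α ∈ P be a Laurent polynomial that is not a constant, and consider the module M_{α,1/2}. Set S₁* = span_ℂ{(α+n)·tⁿ : n ∈ ℤ} ⊆ P (equivalently, S₁* is the image of P under the map α+D). Then: (i) the pair (P, S₁*) is invariant for M_{α,1/2}; (ii) S₁* ≠ P; (iii) every invariant pair (S₀,S₁) for M_{α,1/2} with (S₀,S₁) ≠ ({0},{0}) satisfies P ⊆ S₀ and S₁* ⊆ S₁, so (P, S₁*) is the unique minimal nonzero submodule; (iv) for all (f,g) ∈ W and m ∈ ℤ, both L_m(f,g) and G_m(f,g) lie in P × S₁*, so the induced action of all operators on the quotient W/(P × S₁*) is trivial. -/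
/- STATEMENT 6: For α ∈ ℂ[t,t⁻¹] non-constant, with S₁* = (α+D)(P):
(i) (P, S₁*) is invariant for M_{α,1/2}; (ii) S₁* ≠ P; (iii) every invariant pair
(S₀,S₁) ≠ ({0},{0}) satisfies P ⊆ S₀ and S₁* ⊆ S₁; (iv) all operators map W into
P × S₁*, so the induced action on W/(P × S₁*) is trivial. -/

open LaurentPolynomial

noncomputable section

/-- `S₁*`, the image of `P` under `α + D` (acting as multiplication by `α` plus `D`);
equivalently, the span of the elements `(α+n)·tⁿ`, `n ∈ ℤ`. -/
def S1star (D : Lp →ₗ[ℂ] Lp) (α : Lp) : Submodule ℂ Lp :=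
  LinearMap.range (LinearMap.mulLeft ℂ α + D)

namespace Stmt6Aux

instance : CoeFun Lp (fun _ => ℤ → ℂ) := ⟨fun f => f.coeff⟩

lemma Tapply (k x : ℤ) : (T k : Lp) x = if k = x then 1 else 0 := Finsupp.single_apply

lemma Tmul_apply (m : ℤ) (f : Lp) (k : ℤ) : ((T m * f : Lp)) k = f (k - m) := by
  show ((AddMonoidAlgebra.single m 1 * f : Lp)) k = f (k - m)
  rw [AddMonoidAlgebra.coeff_single_mul_apply, one_mul]
  congr 1
  ring

lemma CmulT (a : ℂ) (n : ℤ) : (C a * T n : Lp) = a • T n := by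
  rw [← single_eq_C_mul_T]
  show _ = a • AddMonoidAlgebra.single n (1 : ℂ)
  rw [AddMonoidAlgebra.smul_single]
  simp

lemma Dapply (D : Lp →ₗ[ℂ] Lp) (hD : ∀ n : ℤ, D (T n) = (n : ℂ) • T n) (f : Lp) (k : ℤ) :
    (D f) k = (k : ℂ) * f k := by
  induction f using LaurentPolynomial.induction_on' with
  | add p q hp hq =>
      rw [map_add, AddMonoidAlgebra.coeff_add, Finsupp.add_apply, AddMonoidAlgebra.coeff_add, Finsupp.add_apply, hp, hq, mul_add]
  | C_mul_T n a =>
      rw [CmulT, map_smul, hD n, AddMonoidAlgebra.coeff_smul_apply, AddMonoidAlgebra.coeff_smul_apply, AddMonoidAlgebra.coeff_smul_apply,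
        Tapply]
      by_cases h : n = k
      · subst h; simp; ring
      · simp [h]

/-- key identity: `(α+D)(T m * h) = T m * ((α+D+m) h)` -/
lemma keyid (D : Lp →ₗ[ℂ] Lp) (hD : ∀ n : ℤ, D (T n) = (n : ℂ) • T n) (α : Lp) (m : ℤ)
    (h : Lp) :
    α * (T m * h) + D (T m * h) = T m * (α * h + D h + (m : ℂ) • h) := by
  have hTm : D (T m * h) = T m * D h + (m : ℂ) • (T m * h) := by
    refine AddMonoidAlgebra.coeff_injective (Finsupp.ext ?_)
    intro k
    rw [Dapply D hD, AddMonoidAlgebra.coeff_add, Finsupp.add_apply, Tmul_apply, Tmul_apply, AddMonoidAlgebra.coeff_smul_apply,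
      Tmul_apply, Dapply D hD]
    simp only [smul_eq_mul]
    push_cast
    ring
  rw [hTm, mul_add, mul_add, mul_smul_comm, mul_left_comm]
  abel

lemma mul_pair (f g : Lp) (x A B : ℤ) (hAB : A + B = x)
    (hkey : ∀ a ∈ f.coeff.support, ∀ b ∈ g.coeff.support, a + b = x → a = A) :
    (f * g) x = f A * g B := by
  rw [AddMonoidAlgebra.mul_apply]
  simp only [Finsupp.sum]
  rw [Finset.sum_eq_single A]
  · rw [Finset.sum_eq_single B]
    · rw [if_pos hAB]
    · intro b hb hne
      exact if_neg fun hc => hne (by omega)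
    · intro hB
      rw [Finsupp.notMem_support_iff.mp hB, mul_zero, ite_self]
  · intro a ha hne
    exact Finset.sum_eq_zero fun b hb => if_neg fun hc => hne (hkey a ha b hb hc)
  · intro hA
    exact Finset.sum_eq_zero fun b hb => by
      rw [Finsupp.notMem_support_iff.mp hA, zero_mul, ite_self]

lemma core1 (D : Lp →ₗ[ℂ] Lp) (hD : ∀ n : ℤ, D (T n) = (n : ℂ) • T n) (α : Lp)
    (hsα : α.coeff.support.Nonempty) (hN : 0 < α.coeff.support.max' hsα) (k : ℤ) (h : Lp)
    (heq : α * h + D h = T k) :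
    ∃ m : ℤ, α 0 = -(m : ℂ) ∧ m ≤ k - α.coeff.support.max' hsα := by
  set N := α.coeff.support.max' hsα with hNdef
  have coeff : ∀ x : ℤ, (α * h) x + (D h) x = (T k : Lp) x := fun x => by
    rw [← Finsupp.add_apply, ← AddMonoidAlgebra.coeff_add, heq]
  have hh0 : h ≠ 0 := by
    rintro rfl
    rw [mul_zero, map_zero, add_zero] at heq
    have := congrArg (fun p : Lp => p k) heq
    simp [Tapply] at this
  have hsh : h.coeff.support.Nonempty := Finsupp.support_nonempty_iff.mpr (mt AddMonoidAlgebra.coeff_eq_zero.mp hh0)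
  set d := h.coeff.support.max' hsh with hddef
  set m := h.coeff.support.min' hsh with hmdef
  have hmd : m ≤ d := h.coeff.support.min'_le _ (h.coeff.support.max'_mem hsh)
  have hαN : α N ≠ 0 := Finsupp.mem_support_iff.mp (α.coeff.support.max'_mem hsα)
  have hhd : h d ≠ 0 := Finsupp.mem_support_iff.mp (h.coeff.support.max'_mem hsh)
  have hhm : h m ≠ 0 := Finsupp.mem_support_iff.mp (h.coeff.support.min'_mem hsh)
  have c1 : (α * h) (N + d) = α N * h d := by
    refine mul_pair α h (N + d) N d rfl fun a ha b hb hab => ?_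
    have h1 : a ≤ N := α.coeff.support.le_max' a ha
    have h2 : b ≤ d := h.coeff.support.le_max' b hb
    omega
  have c2 : h (N + d) = 0 := by
    by_contra hc
    have := h.coeff.support.le_max' _ (Finsupp.mem_support_iff.mpr hc)
    omega
  have ck : k = N + d := by
    by_contra hc
    have hx := coeff (N + d)
    rw [c1, Dapply D hD, c2, mul_zero, add_zero, Tapply, if_neg hc] at hx
    exact mul_ne_zero hαN hhd hx
  by_cases hM : 0 ≤ α.coeff.support.min' hsα
  · have c3 : (α * h) m = α 0 * h m := by
      refine mul_pair α h m 0 m (zero_add m) fun a ha b hb hab => ?_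
      have h1 : α.coeff.support.min' hsα ≤ a := α.coeff.support.min'_le a ha
      have h2 : m ≤ b := h.coeff.support.min'_le b hb
      omega
    have c4 := coeff m
    rw [c3, Dapply D hD, Tapply, if_neg (by omega : ¬ k = m)] at c4
    have h5 : (α 0 + (m : ℂ)) * h m = 0 := by rw [add_mul]; exact c4
    rcases mul_eq_zero.mp h5 with h6 | h6
    · exact ⟨m, by linear_combination h6, by omega⟩
    · exact absurd h6 hhm
  · push_neg at hM
    set M := α.coeff.support.min' hsα with hMdef
    have hαM : α M ≠ 0 := Finsupp.mem_support_iff.mp (α.coeff.support.min'_mem hsα)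
    have c5 : (α * h) (M + m) = α M * h m := by
      refine mul_pair α h (M + m) M m rfl fun a ha b hb hab => ?_
      have h1 : M ≤ a := α.coeff.support.min'_le a ha
      have h2 : m ≤ b := h.coeff.support.min'_le b hb
      omega
    have c6 : h (M + m) = 0 := by
      by_contra hc
      have := h.coeff.support.min'_le _ (Finsupp.mem_support_iff.mpr hc)
      omega
    have c7 := coeff (M + m)
    rw [c5, Dapply D hD, c6, mul_zero, add_zero, Tapply,
      if_neg (by omega : ¬ k = M + m)] at c7
    exact absurd c7 (mul_ne_zero hαM hhm)

lemma core2 (D : Lp →ₗ[ℂ] Lp) (hD : ∀ n : ℤ, D (T n) = (n : ℂ) • T n) (α : Lp)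
    (hsα : α.coeff.support.Nonempty) (hM : α.coeff.support.min' hsα < 0) (k : ℤ) (h : Lp)
    (heq : α * h + D h = T k) :
    ∃ d : ℤ, α 0 = -(d : ℂ) ∧ k - α.coeff.support.min' hsα ≤ d := by
  set M := α.coeff.support.min' hsα with hMdef
  have coeff : ∀ x : ℤ, (α * h) x + (D h) x = (T k : Lp) x := fun x => by
    rw [← Finsupp.add_apply, ← AddMonoidAlgebra.coeff_add, heq]
  have hh0 : h ≠ 0 := by
    rintro rfl
    rw [mul_zero, map_zero, add_zero] at heq
    have := congrArg (fun p : Lp => p k) heq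
    simp [Tapply] at this
  have hsh : h.coeff.support.Nonempty := Finsupp.support_nonempty_iff.mpr (mt AddMonoidAlgebra.coeff_eq_zero.mp hh0)
  set d := h.coeff.support.max' hsh with hddef
  set m := h.coeff.support.min' hsh with hmdef
  have hmd : m ≤ d := h.coeff.support.min'_le _ (h.coeff.support.max'_mem hsh)
  have hαM : α M ≠ 0 := Finsupp.mem_support_iff.mp (α.coeff.support.min'_mem hsα)
  have hhd : h d ≠ 0 := Finsupp.mem_support_iff.mp (h.coeff.support.max'_mem hsh)
  have hhm : h m ≠ 0 := Finsupp.mem_support_iff.mp (h.coeff.support.min'_mem hsh)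
  have c1 : (α * h) (M + m) = α M * h m := by
    refine mul_pair α h (M + m) M m rfl fun a ha b hb hab => ?_
    have h1 : M ≤ a := α.coeff.support.min'_le a ha
    have h2 : m ≤ b := h.coeff.support.min'_le b hb
    omega
  have c2 : h (M + m) = 0 := by
    by_contra hc
    have := h.coeff.support.min'_le _ (Finsupp.mem_support_iff.mpr hc)
    omega
  have ck : k = M + m := by
    by_contra hc
    have hx := coeff (M + m)
    rw [c1, Dapply D hD, c2, mul_zero, add_zero, Tapply, if_neg hc] at hx
    exact mul_ne_zero hαM hhm hx
  by_cases hN : α.coeff.support.max' hsα ≤ 0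
  · have c3 : (α * h) d = α 0 * h d := by
      refine mul_pair α h d 0 d (zero_add d) fun a ha b hb hab => ?_
      have h1 : a ≤ α.coeff.support.max' hsα := α.coeff.support.le_max' a ha
      have h2 : b ≤ d := h.coeff.support.le_max' b hb
      omega
    have c4 := coeff d
    rw [c3, Dapply D hD, Tapply, if_neg (by omega : ¬ k = d)] at c4
    have h5 : (α 0 + (d : ℂ)) * h d = 0 := by rw [add_mul]; exact c4
    rcases mul_eq_zero.mp h5 with h6 | h6
    · exact ⟨d, by linear_combination h6, by omega⟩
    · exact absurd h6 hhd
  · push_neg at hN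
    set N := α.coeff.support.max' hsα with hNdef
    have hαN : α N ≠ 0 := Finsupp.mem_support_iff.mp (α.coeff.support.max'_mem hsα)
    have c5 : (α * h) (N + d) = α N * h d := by
      refine mul_pair α h (N + d) N d rfl fun a ha b hb hab => ?_
      have h1 : a ≤ N := α.coeff.support.le_max' a ha
      have h2 : b ≤ d := h.coeff.support.le_max' b hb
      omega
    have c6 : h (N + d) = 0 := by
      by_contra hc
      have := h.coeff.support.le_max' _ (Finsupp.mem_support_iff.mpr hc)
      omega
    have c7 := coeff (N + d)
    rw [c5, Dapply D hD, c6, mul_zero, add_zero, Tapply,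
      if_neg (by omega : ¬ k = N + d)] at c7
    exact absurd c7 (mul_ne_zero hαN hhd)

lemma not_top (D : Lp →ₗ[ℂ] Lp) (hD : ∀ n : ℤ, D (T n) = (n : ℂ) • T n) (α : Lp)
    (hα : ∀ c : ℂ, α ≠ C c) :
    ∃ k : ℤ, ∀ h : Lp, α * h + D h ≠ T k := by
  have hα0 : α ≠ 0 := fun hc => hα 0 (by rw [hc, map_zero])
  have hsα : α.coeff.support.Nonempty := Finsupp.support_nonempty_iff.mpr (mt AddMonoidAlgebra.coeff_eq_zero.mp hα0)
  have hn₀ : ∃ n : ℤ, n ≠ 0 ∧ α n ≠ 0 := by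
    by_contra hc
    push_neg at hc
    apply hα (α 0)
    rw [← single_eq_C]
    refine AddMonoidAlgebra.coeff_injective (Finsupp.ext ?_)
    intro kk
    rw [AddMonoidAlgebra.coeff_single, Finsupp.single_apply]
    by_cases hk : (0 : ℤ) = kk
    · subst hk; simp
    · rw [if_neg hk]
      exact hc kk fun hz => hk hz.symm
  obtain ⟨n₀, hn₀ne, hn₀⟩ := hn₀
  have hn₀mem : n₀ ∈ α.coeff.support := Finsupp.mem_support_iff.mpr hn₀
  by_cases hN : 0 < α.coeff.support.max' hsα
  · by_cases hz : ∃ m : ℤ, α 0 = -(m : ℂ)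
    · obtain ⟨m₀, hm₀⟩ := hz
      refine ⟨α.coeff.support.max' hsα + m₀ - 1, fun h hc => ?_⟩
      obtain ⟨m, hm, hineq⟩ := core1 D hD α hsα hN _ h hc
      have hmm : (m₀ : ℂ) = (m : ℂ) := by
        have := hm₀.symm.trans hm
        exact neg_inj.mp this
      have : m₀ = m := by exact_mod_cast hmm
      omega
    · refine ⟨0, fun h hc => ?_⟩
      obtain ⟨m, hm, _⟩ := core1 D hD α hsα hN 0 h hc
      exact hz ⟨m, hm⟩
  · push_neg at hN
    have hM : α.coeff.support.min' hsα < 0 := by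
      have h2 := α.coeff.support.le_max' n₀ hn₀mem
      have h3 := α.coeff.support.min'_le n₀ hn₀mem
      omega
    by_cases hz : ∃ m : ℤ, α 0 = -(m : ℂ)
    · obtain ⟨m₀, hm₀⟩ := hz
      refine ⟨α.coeff.support.min' hsα + m₀ + 1, fun h hc => ?_⟩
      obtain ⟨dd, hdd, hineq⟩ := core2 D hD α hsα hM _ h hc
      have hmm : (m₀ : ℂ) = (dd : ℂ) := by
        have := hm₀.symm.trans hdd
        exact neg_inj.mp this
      have : m₀ = dd := by exact_mod_cast hmm
      omega
    · refine ⟨0, fun h hc => ?_⟩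
      obtain ⟨dd, hdd, _⟩ := core2 D hD α hsα hM 0 h hc
      exact hz ⟨dd, hdd⟩

lemma S1star_ne_top (D : Lp →ₗ[ℂ] Lp) (hD : ∀ n : ℤ, D (T n) = (n : ℂ) • T n) (α : Lp)
    (hα : ∀ c : ℂ, α ≠ C c) : S1star D α ≠ ⊤ := by
  obtain ⟨k, hk⟩ := not_top D hD α hα
  intro hc
  have : (T k : Lp) ∈ S1star D α := hc ▸ Submodule.mem_top
  obtain ⟨u, hu⟩ := this
  rw [LinearMap.add_apply, LinearMap.mulLeft_apply] at hu
  exact hk u hu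

lemma topgen (S : Submodule ℂ Lp) (hmono : ∀ k : ℤ, T k ∈ S) : S = ⊤ := by
  rw [eq_top_iff]
  suffices h : ∀ g : Lp, g ∈ S by exact fun g _ => h g
  intro g
  induction g using LaurentPolynomial.induction_on' with
  | add p q hp hq => exact S.add_mem hp hq
  | C_mul_T n a => rw [CmulT]; exact S.smul_mem a (hmono n)

lemma mulstab (S : Submodule ℂ Lp) (f : Lp) (hT : ∀ u : ℤ, T u * f ∈ S) (p : Lp) :
    p * f ∈ S := by
  induction p using LaurentPolynomial.induction_on' with
  | add p q hp hq => rw [add_mul]; exact S.add_mem hp hq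
  | C_mul_T n a => rw [CmulT, smul_mul_assoc]; exact S.smul_mem a (hT n)

lemma gen (D : Lp →ₗ[ℂ] Lp) (hD : ∀ n : ℤ, D (T n) = (n : ℂ) • T n) (S : Submodule ℂ Lp)
    (hT : ∀ f ∈ S, ∀ s : ℤ, T s * f ∈ S) (hDS : ∀ f ∈ S, D f ∈ S)
    (f : Lp) (hf : f ∈ S) (hf0 : f ≠ 0) : S = ⊤ := by
  have key : ∀ c : ℕ, ∀ f ∈ S, f ≠ 0 → f.coeff.support.card ≤ c → ∃ n : ℤ, T n ∈ S := by
    intro c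
    induction c with
    | zero =>
        intro f _ hf0 hcard
        exact absurd (Finset.card_eq_zero.mp (Nat.le_zero.mp hcard))
          (Finsupp.support_nonempty_iff.mpr (mt AddMonoidAlgebra.coeff_eq_zero.mp hf0)).ne_empty
    | succ c ih =>
        intro f hf hf0 hcard
        have hne : f.coeff.support.Nonempty := Finsupp.support_nonempty_iff.mpr (mt AddMonoidAlgebra.coeff_eq_zero.mp hf0)
        by_cases h1 : f.coeff.support.card = 1
        · obtain ⟨a, b, hb, hfs⟩ := Finsupp.card_support_eq_one'.mp h1
          refine ⟨a, ?_⟩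
          have hTa : (T a : Lp) = b⁻¹ • f := by
            apply AddMonoidAlgebra.coeff_injective
            rw [AddMonoidAlgebra.coeff_smul, hfs]
            show Finsupp.single a (1 : ℂ) = b⁻¹ • Finsupp.single a b
            rw [Finsupp.smul_single, smul_eq_mul, inv_mul_cancel₀ hb]
          rw [hTa]
          exact S.smul_mem _ hf
        · have hge2 : 2 ≤ f.coeff.support.card := by
            have h0 : f.coeff.support.card ≠ 0 := hne.card_pos.ne'
            omega
          set n₀ := f.coeff.support.min' hne with hn
          have hn₀ : n₀ ∈ f.coeff.support := Finset.min'_mem _ _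
          set f' : Lp := D f - ((n₀ : ℂ)) • f with hf'
          have hf'S : f' ∈ S := S.sub_mem (hDS f hf) (S.smul_mem _ hf)
          have hcoe : ∀ k : ℤ, f' k = ((k : ℂ) - (n₀ : ℂ)) * f k := by
            intro k
            rw [hf', AddMonoidAlgebra.coeff_sub, Finsupp.sub_apply, AddMonoidAlgebra.coeff_smul_apply, Dapply D hD, smul_eq_mul]
            ring
          have hsub : f'.coeff.support ⊆ f.coeff.support.erase n₀ := by
            intro k hk
            have hk' := Finsupp.mem_support_iff.mp hk
            rw [hcoe k] at hk'
            have h2 : f k ≠ 0 := fun hz => hk' (by rw [hz, mul_zero])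
            have h3 : k ≠ n₀ := by
              intro hz
              apply hk'
              rw [hz]
              simp
            exact Finset.mem_erase.mpr ⟨h3, Finsupp.mem_support_iff.mpr h2⟩
          have hf'0 : f' ≠ 0 := by
            obtain ⟨n₁, hn₁, hne1⟩ := Finset.exists_mem_ne (s := f.coeff.support) (by omega) n₀
            intro hz
            have hz1 : f' n₁ = 0 := by rw [hz]; simp
            rw [hcoe n₁] at hz1
            rcases mul_eq_zero.mp hz1 with h | h
            · exact hne1 (by exact_mod_cast sub_eq_zero.mp h)
            · exact Finsupp.mem_support_iff.mp hn₁ h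
          have hle : f'.coeff.support.card ≤ f.coeff.support.card - 1 := by
            rw [← Finset.card_erase_of_mem hn₀]
            exact Finset.card_le_card hsub
          exact ih f' hf'S hf'0 (by omega)
  obtain ⟨n, hn⟩ := key f.coeff.support.card f hf hf0 le_rfl
  apply topgen
  intro k
  have h2 := hT _ hn (k - n)
  rwa [← T_add, show k - n + n = k by omega] at h2

lemma opstar (D : Lp →ₗ[ℂ] Lp) (hD : ∀ n : ℤ, D (T n) = (n : ℂ) • T n) (α : Lp) :
    ∀ m : ℤ, ∀ w : Lp × Lp,
      (Lop D α (1 / 2) m w).2 ∈ S1star D α ∧ (Gop D α (1 / 2) m w).2 ∈ S1star D α := by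
  intro m w
  have key : ∀ g : Lp, T m * (α * g + D g + (m : ℂ) • g) ∈ S1star D α := by
    intro g
    refine LinearMap.mem_range.mpr ⟨T m * g, ?_⟩
    rw [LinearMap.add_apply, LinearMap.mulLeft_apply]
    exact keyid D hD α m g
  constructor
  · simp only [Lop]
    rw [show ((m : ℂ) * (1 / 2 + 1 / 2)) = (m : ℂ) by ring]
    exact key w.2
  · simp only [Gop]
    rw [show (2 * (m : ℂ) * (1 / 2)) = (m : ℂ) by ring]
    exact key w.1

lemma classify (D : Lp →ₗ[ℂ] Lp) (hD : ∀ n : ℤ, D (T n) = (n : ℂ) • T n) (α : Lp)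
    (S₀ S₁ : Submodule ℂ Lp) (hInv : RInv D α (1 / 2) S₀ S₁)
    (hne : ¬(S₀ = ⊥ ∧ S₁ = ⊥)) : S₀ = ⊤ ∧ S1star D α ≤ S₁ := by
  have hG1 : ∀ g ∈ S₁, ∀ s : ℤ, T s * g ∈ S₀ := by
    intro g hg s
    have h1 := (hInv s 0 S₀.zero_mem g hg).2.2.1
    simp only [Gop] at h1
    rw [← neg_neg (T s * g)]
    exact S₀.neg_mem h1
  have hG2 : ∀ f ∈ S₀, ∀ m : ℤ, T m * (α * f + D f + (m : ℂ) • f) ∈ S₁ := by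
    intro f hf m
    have H := (hInv m f hf 0 S₁.zero_mem).2.2.2
    simp only [Gop] at H
    rwa [show (2 * (m : ℂ) * (1 / 2)) = (m : ℂ) by ring] at H
  have hcomb : ∀ f ∈ S₀, ∀ u m : ℤ, T u * (α * f + D f + (m : ℂ) • f) ∈ S₀ := by
    intro f hf u m
    have h1 := hG1 _ (hG2 f hf m) (u - m)
    rwa [← mul_assoc, ← T_add, show u - m + m = u by omega] at h1
  have hTmul : ∀ f ∈ S₀, ∀ u : ℤ, T u * f ∈ S₀ := by
    intro f hf u
    have hC := S₀.sub_mem (hcomb f hf u 1) (hcomb f hf u 0)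
    have e : T u * (α * f + D f + ((1 : ℤ) : ℂ) • f)
        - T u * (α * f + D f + ((0 : ℤ) : ℂ) • f) = T u * f := by
      push_cast
      rw [one_smul, zero_smul, add_zero, ← mul_sub, add_sub_cancel_left]
    rwa [e] at hC
  have hDS : ∀ f ∈ S₀, D f ∈ S₀ := by
    intro f hf
    have h0 := hcomb f hf 0 0
    rw [T_zero, one_mul, Int.cast_zero, zero_smul, add_zero] at h0
    have hαf : α * f ∈ S₀ := mulstab S₀ f (hTmul f hf) α
    have h2 := S₀.sub_mem h0 hαf
    rwa [add_sub_cancel_left] at h2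
  have hS0ne : S₀ ≠ ⊥ := by
    intro hbot
    rw [not_and] at hne
    obtain ⟨g, hg, hg0⟩ := (Submodule.ne_bot_iff S₁).mp (hne hbot)
    have h1 := hG1 g hg 0
    rw [T_zero, one_mul, hbot] at h1
    exact hg0 ((Submodule.mem_bot ℂ).mp h1)
  obtain ⟨f, hf, hf0⟩ := (Submodule.ne_bot_iff S₀).mp hS0ne
  have hS0top : S₀ = ⊤ := gen D hD S₀ hTmul hDS f hf hf0
  refine ⟨hS0top, ?_⟩
  rintro x hx
  obtain ⟨u, hu⟩ := hx
  have h1 := hG2 u (hS0top ▸ Submodule.mem_top) 0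
  rw [T_zero, one_mul, Int.cast_zero, zero_smul, add_zero] at h1
  have hx2 : (LinearMap.mulLeft ℂ α + D) u = α * u + D u := by
    rw [LinearMap.add_apply, LinearMap.mulLeft_apply]
  rw [← hu, hx2]
  exact h1

end Stmt6Aux

theorem stmt6 (D : Lp →ₗ[ℂ] Lp)
    (hD : ∀ n : ℤ, D (T n) = (n : ℂ) • T n)
    (α : Lp) (hα : ∀ c : ℂ, α ≠ C c) :
    RInv D α (1 / 2) ⊤ (S1star D α) ∧
    S1star D α ≠ ⊤ ∧
    (∀ S₀ S₁ : Submodule ℂ Lp, RInv D α (1 / 2) S₀ S₁ → ¬(S₀ = ⊥ ∧ S₁ = ⊥) →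
      S₀ = ⊤ ∧ S1star D α ≤ S₁) ∧
    (∀ m : ℤ, ∀ w : Lp × Lp,
      (Lop D α (1 / 2) m w).2 ∈ S1star D α ∧ (Gop D α (1 / 2) m w).2 ∈ S1star D α) := by
  refine ⟨?_, Stmt6Aux.S1star_ne_top D hD α hα,
    fun S₀ S₁ hInv hne => Stmt6Aux.classify D hD α S₀ S₁ hInv hne,
    Stmt6Aux.opstar D hD α⟩
  intro m f _ g hg
  exact ⟨Submodule.mem_top, (Stmt6Aux.opstar D hD α m (f, g)).1,
    Submodule.mem_top, (Stmt6Aux.opstar D hD α m (f, g)).2⟩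

end
end

section
/- Let α ∈ P be a Laurent polynomial that is not a constant, and let b ∈ ℂ with b ≠ 1/2. Then the only invariant pairs for V_{α,b} are ({0},{0}) and (P,P); i.e., V_{α,b} is an irreducible module over the N=2 Ramond algebra. -/
/- STATEMENT 8: For α ∈ ℂ[t,t⁻¹] non-constant and b ≠ 1/2, the module V_{α,b} over the
N=2 Ramond algebra is irreducible: the only invariant pairs are ({0},{0}) and (P,P). -/

open LaurentPolynomial

noncomputable section

/-- `H_m(f,g) = (−2b·t^m f, (1−2b)·t^m g)` -/
def Hop (b : ℂ) (m : ℤ) : Lp × Lp → Lp × Lp :=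
  fun w => ((-2 * b) • (T m * w.1), (1 - 2 * b) • (T m * w.2))

/-- `G_m⁺(f,g) = (0, −2t^m(α+D+2mb)f)` -/
def Gp (D : Lp →ₗ[ℂ] Lp) (α : Lp) (b : ℂ) (m : ℤ) : Lp × Lp → Lp × Lp :=
  fun w => (0, (-2 : ℂ) • (T m * (α * w.1 + D w.1 + (2 * (m : ℂ) * b) • w.1)))

/-- `G_m⁻(f,g) = (t^m g, 0)` -/
def Gm (m : ℤ) : Lp × Lp → Lp × Lp :=
  fun w => (T m * w.2, 0)

/-- `(S₀, S₁)` is an invariant pair for `V_{α,b}`: `S₀ × S₁` is stable under all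
operators `L_m`, `H_m`, `G_m⁺`, `G_m⁻`. -/
def TInv (D : Lp →ₗ[ℂ] Lp) (α : Lp) (b : ℂ) (S₀ S₁ : Submodule ℂ Lp) : Prop :=
  ∀ m : ℤ, ∀ f ∈ S₀, ∀ g ∈ S₁,
    (Lop D α b m (f, g)).1 ∈ S₀ ∧ (Lop D α b m (f, g)).2 ∈ S₁ ∧
    (Hop b m (f, g)).1 ∈ S₀ ∧ (Hop b m (f, g)).2 ∈ S₁ ∧
    (Gp D α b m (f, g)).1 ∈ S₀ ∧ (Gp D α b m (f, g)).2 ∈ S₁ ∧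
    (Gm m (f, g)).1 ∈ S₀ ∧ (Gm m (f, g)).2 ∈ S₁



lemma sum_T (f : Lp) : f = f.coeff.sum fun n a => a • (T n : Lp) := by
  conv_lhs => rw [← f.sum_coeff_single]
  congr 1; ext n a; rw [T, AddMonoidAlgebra.smul_single', mul_one]

lemma Dcoeff (D : Lp →ₗ[ℂ] Lp) (hD : ∀ n : ℤ, D (T n) = (n : ℂ) • T n)
    (f : Lp) (k : ℤ) : (D f).coeff k = (k : ℂ) * f.coeff k := by
  classical
  conv_lhs => rw [sum_T f, map_finsuppSum]
  rw [AddMonoidAlgebra.coeff_finsuppSum, Finsupp.sum_apply, Finsupp.sum]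
  simp only [map_smul, hD]
  rw [Finset.sum_eq_single k]
  · rw [AddMonoidAlgebra.coeff_smul_apply, AddMonoidAlgebra.coeff_smul_apply, T_apply, if_pos rfl]
    rw [smul_eq_mul, smul_eq_mul]; ring
  · intro n _ hnk
    rw [AddMonoidAlgebra.coeff_smul_apply, AddMonoidAlgebra.coeff_smul_apply, T_apply, if_neg hnk]
    simp
  · intro hk; rw [Finsupp.notMem_support_iff.mp hk]; simp

lemma mul_apply_le (p q : Lp) (a n : ℤ) (hp : ∀ i ∈ p.coeff.support, i ≤ a)
    (hq : ∀ j ∈ q.coeff.support, j ≤ n) : (p * q).coeff (a + n) = p.coeff a * q.coeff n := by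
  classical
  rw [AddMonoidAlgebra.coeff_mul, Finsupp.sum]
  rw [Finset.sum_eq_single a]
  · rw [Finsupp.sum, Finset.sum_eq_single n]
    · rw [if_pos rfl]
    · intro j hj hjn; rw [if_neg]; omega
    · intro hn; rw [if_pos rfl, Finsupp.notMem_support_iff.mp hn, mul_zero]
  · intro i hi hia
    rw [Finsupp.sum]; apply Finset.sum_eq_zero; intro j hj
    have h1 := hp i hi; have h2 := hq j hj
    rw [if_neg]; omega
  · intro ha
    rw [Finsupp.sum]; apply Finset.sum_eq_zero; intro j hj
    rw [Finsupp.notMem_support_iff.mp ha, zero_mul]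
    split <;> rfl

lemma mul_apply_ge (p q : Lp) (a n : ℤ) (hp : ∀ i ∈ p.coeff.support, a ≤ i)
    (hq : ∀ j ∈ q.coeff.support, n ≤ j) : (p * q).coeff (a + n) = p.coeff a * q.coeff n := by
  classical
  rw [AddMonoidAlgebra.coeff_mul, Finsupp.sum]
  rw [Finset.sum_eq_single a]
  · rw [Finsupp.sum, Finset.sum_eq_single n]
    · rw [if_pos rfl]
    · intro j hj hjn; rw [if_neg]; omega
    · intro hn; rw [if_pos rfl, Finsupp.notMem_support_iff.mp hn, mul_zero]
  · intro i hi hia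
    rw [Finsupp.sum]; apply Finset.sum_eq_zero; intro j hj
    have h1 := hp i hi; have h2 := hq j hj
    rw [if_neg]; omega
  · intro ha
    rw [Finsupp.sum]; apply Finset.sum_eq_zero; intro j hj
    rw [Finsupp.notMem_support_iff.mp ha, zero_mul]
    split <;> rfl

lemma exists_T_mem (D : Lp →ₗ[ℂ] Lp) (hD : ∀ n : ℤ, D (T n) = (n : ℂ) • T n)
    (S : Submodule ℂ Lp) (hDS : ∀ g ∈ S, D g ∈ S) :
    ∀ N : ℕ, ∀ g ∈ S, g ≠ 0 → g.coeff.support.card ≤ N → ∃ k : ℤ, (T k : Lp) ∈ S := by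
  intro N
  induction N with
  | zero =>
    intro g _ hg hc
    exact absurd (Finsupp.support_eq_empty.mp (Finset.card_eq_zero.mp (Nat.le_zero.mp hc))) (AddMonoidAlgebra.coeff_eq_zero.not.mpr hg)
  | succ N ih =>
    intro g hgS hg hc
    have hne : g.coeff.support.Nonempty :=
      Finsupp.support_nonempty_iff.mpr (AddMonoidAlgebra.coeff_eq_zero.not.mpr hg)
    obtain ⟨k₀, hk₀⟩ := hne
    by_cases hs : ∀ k ∈ g.coeff.support, k = k₀
    · refine ⟨k₀, ?_⟩
      have he : (g.coeff k₀)⁻¹ • g = (T k₀ : Lp) := by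
        ext k
        rw [AddMonoidAlgebra.coeff_smul_apply, T_apply]
        by_cases h : k = k₀
        · subst h; rw [if_pos rfl, smul_eq_mul,
            inv_mul_cancel₀ (Finsupp.mem_support_iff.mp hk₀)]
        · rw [if_neg (fun hh => h hh.symm)]
          have : k ∉ g.coeff.support := fun hk => h (hs k hk)
          rw [Finsupp.notMem_support_iff.mp this, smul_zero]
      rw [← he]; exact S.smul_mem _ hgS
    · push_neg at hs
      obtain ⟨k₁, hk₁, hk₁0⟩ := hs
      set h : Lp := D g - (k₀ : ℂ) • g with hh
      have hcoeff : ∀ k, h.coeff k = ((k : ℂ) - k₀) * g.coeff k := by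
        intro k
        rw [hh, AddMonoidAlgebra.coeff_sub, Finsupp.sub_apply, AddMonoidAlgebra.coeff_smul_apply, Dcoeff D hD, smul_eq_mul, sub_mul]
      have hhS : h ∈ S := S.sub_mem (hDS g hgS) (S.smul_mem _ hgS)
      have hh0 : h ≠ 0 := by
        intro h0
        have := hcoeff k₁
        rw [h0] at this
        simp only [AddMonoidAlgebra.coeff_zero, Finsupp.coe_zero, Pi.zero_apply] at this
        have := this.symm
        rcases mul_eq_zero.mp this with h' | h'
        · have : (k₁ : ℂ) = (k₀ : ℂ) := by linear_combination h'
          exact hk₁0 (by exact_mod_cast this)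
        · exact Finsupp.mem_support_iff.mp hk₁ h'
      have hsub : h.coeff.support ⊆ g.coeff.support.erase k₀ := by
        intro k hk
        have hk' := Finsupp.mem_support_iff.mp hk
        rw [hcoeff k] at hk'
        rcases mul_ne_zero_iff.mp hk' with ⟨h1, h2⟩
        refine Finset.mem_erase.mpr ⟨?_, Finsupp.mem_support_iff.mpr h2⟩
        intro he; apply h1; rw [he]; ring
      have hcard : h.coeff.support.card ≤ N := by
        calc h.coeff.support.card ≤ (g.coeff.support.erase k₀).card := Finset.card_le_card hsub
          _ = g.coeff.support.card - 1 := Finset.card_erase_of_mem hk₀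
          _ ≤ N := by omega
      exact ih h hhS hh0 hcard

lemma claimA (D : Lp →ₗ[ℂ] Lp) (hD : ∀ n : ℤ, D (T n) = (n : ℂ) • T n)
    (S : Submodule ℂ Lp) (hT : ∀ m : ℤ, ∀ g ∈ S, (T m : Lp) * g ∈ S)
    (hDS : ∀ g ∈ S, D g ∈ S) (hne : S ≠ ⊥) : S = ⊤ := by
  obtain ⟨g, hgS, hg⟩ := (Submodule.ne_bot_iff S).mp hne
  obtain ⟨k, hk⟩ := exists_T_mem D hD S hDS g.coeff.support.card g hgS hg le_rfl
  have hall : ∀ m : ℤ, (T m : Lp) ∈ S := by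
    intro m
    have := hT (m - k) _ hk
    rwa [← T_add, sub_add_cancel] at this
  rw [eq_top_iff]
  intro f _
  rw [sum_T f]
  exact Submodule.sum_mem _ fun n _ => S.smul_mem _ (hall n)

lemma claimB (D : Lp →ₗ[ℂ] Lp) (hD : ∀ n : ℤ, D (T n) = (n : ℂ) • T n)
    (α : Lp) (hα : ∀ c : ℂ, α ≠ C c) (f : Lp) (hrel : α * f + D f = 0) : f = 0 := by
  by_contra hf
  have hfs : f.coeff.support.Nonempty :=
    Finsupp.support_nonempty_iff.mpr (AddMonoidAlgebra.coeff_eq_zero.not.mpr hf)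
  have hcoeff : ∀ k : ℤ, (α * f).coeff k = -((k : ℂ) * f.coeff k) := by
    intro k
    have : α * f = -(D f) := eq_neg_of_add_eq_zero_left hrel
    rw [this, AddMonoidAlgebra.coeff_neg, Finsupp.neg_apply, Dcoeff D hD]
  have hk : ∃ k ∈ α.coeff.support, k ≠ 0 := by
    by_contra hc; push_neg at hc
    apply hα (α.coeff 0)
    ext k
    rw [C_apply]
    by_cases h : k = 0
    · subst h; rw [if_pos rfl]
    · rw [if_neg h]
      by_cases hks : k ∈ α.coeff.support
      · exact absurd (hc k hks) h
      · exact Finsupp.notMem_support_iff.mp hks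
  obtain ⟨k, hkmem, hk0⟩ := hk
  have hαs : α.coeff.support.Nonempty := ⟨k, hkmem⟩
  by_cases hpos : 0 < α.coeff.support.max' hαs
  · set M := α.coeff.support.max' hαs with hM
    set N := f.coeff.support.max' hfs with hN
    have h1 : (α * f).coeff (M + N) = α.coeff M * f.coeff N :=
      mul_apply_le _ _ _ _ (fun i hi => Finset.le_max' _ i hi)
        (fun j hj => Finset.le_max' _ j hj)
    have h4 : f.coeff (M + N) = 0 := by
      apply Finsupp.notMem_support_iff.mp
      intro hmem
      have := Finset.le_max' f.coeff.support _ hmem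
      omega
    rw [hcoeff, h4, mul_zero, neg_zero] at h1
    exact mul_ne_zero (Finsupp.mem_support_iff.mp (Finset.max'_mem _ hαs))
      (Finsupp.mem_support_iff.mp (Finset.max'_mem _ hfs)) h1.symm
  · have hkneg : k < 0 := by
      have := Finset.le_max' α.coeff.support k hkmem
      omega
    have hmin : α.coeff.support.min' hαs < 0 := lt_of_le_of_lt (Finset.min'_le _ k hkmem) hkneg
    set M := α.coeff.support.min' hαs with hM
    set N := f.coeff.support.min' hfs with hN
    have h1 : (α * f).coeff (M + N) = α.coeff M * f.coeff N :=
      mul_apply_ge _ _ _ _ (fun i hi => Finset.min'_le _ i hi)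
        (fun j hj => Finset.min'_le _ j hj)
    have h4 : f.coeff (M + N) = 0 := by
      apply Finsupp.notMem_support_iff.mp
      intro hmem
      have := Finset.min'_le f.coeff.support _ hmem
      omega
    rw [hcoeff, h4, mul_zero, neg_zero] at h1
    exact mul_ne_zero (Finsupp.mem_support_iff.mp (Finset.min'_mem _ hαs))
      (Finsupp.mem_support_iff.mp (Finset.min'_mem _ hfs)) h1.symm

theorem stmt8 (D : Lp →ₗ[ℂ] Lp)
    (hD : ∀ n : ℤ, D (T n) = (n : ℂ) • T n)
    (α : Lp) (hα : ∀ c : ℂ, α ≠ C c) (b : ℂ) (hb : b ≠ 1 / 2) :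
    ∀ S₀ S₁ : Submodule ℂ Lp, TInv D α b S₀ S₁ →
      (S₀ = ⊥ ∧ S₁ = ⊥) ∨ (S₀ = ⊤ ∧ S₁ = ⊤) := by
  intro S₀ S₁ hinv
  have hb' : (1 - 2 * b) ≠ 0 := by
    intro h; apply hb; linear_combination -h / 2
  have hT₁ : ∀ m : ℤ, ∀ g ∈ S₁, (T m : Lp) * g ∈ S₁ := by
    intro m g hg
    have h := (hinv m 0 (zero_mem _) g hg).2.2.2.1
    simp only [Hop] at h
    have h2 := S₁.smul_mem (1 - 2 * b)⁻¹ h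
    rwa [smul_smul, inv_mul_cancel₀ hb', one_smul] at h2
  have hmul₁ : ∀ p : Lp, ∀ g ∈ S₁, p * g ∈ S₁ := by
    intro p g hg
    have he : p * g = p.coeff.sum fun n a => a • ((T n : Lp) * g) := by
      conv_lhs => rw [sum_T p]
      rw [Finsupp.sum_mul]
      congr 1; ext n a; rw [smul_mul_assoc]
    rw [he]
    exact Submodule.sum_mem _ fun n _ => S₁.smul_mem _ (hT₁ n g hg)
  have hD₁ : ∀ g ∈ S₁, D g ∈ S₁ := by
    intro g hg
    have h := (hinv 0 0 (zero_mem _) g hg).2.1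
    simp only [Lop, T_zero, one_mul, Int.cast_zero, zero_mul, zero_smul, add_zero] at h
    have h2 := S₁.sub_mem h (hmul₁ α g hg)
    rwa [add_sub_cancel_left] at h2
  by_cases h1 : S₁ = ⊥
  · left
    refine ⟨?_, h1⟩
    rw [eq_bot_iff]
    intro f hf
    rw [Submodule.mem_bot]
    have hrel : ∀ m : ℤ, α * f + D f + (2 * (m : ℂ) * b) • f = 0 := by
      intro m
      have h := (hinv m f hf 0 (zero_mem _)).2.2.2.2.2.1
      rw [h1, Submodule.mem_bot] at h
      simp only [Gp] at h
      have h2 : (T m : Lp) * (α * f + D f + (2 * (m : ℂ) * b) • f) = 0 := by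
        rcases smul_eq_zero.mp h with h' | h'
        · norm_num at h'
        · exact h'
      exact (isUnit_T m).mul_right_eq_zero.mp h2
    have h0' := hrel 0
    simp only [Int.cast_zero, mul_zero, zero_mul, zero_smul, add_zero] at h0'
    by_cases hb0 : b = 0
    · exact claimB D hD α hα f h0'
    · have h1' := hrel 1
      rw [h0'] at h1'
      simp only [Int.cast_one, mul_one, zero_add] at h1'
      rcases smul_eq_zero.mp h1' with h' | h'
      · exact absurd (by linear_combination h' / 2) hb0
      · exact h'
  · right
    have hS₁ : S₁ = ⊤ := claimA D hD S₁ hT₁ hD₁ h1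
    refine ⟨?_, hS₁⟩
    rw [eq_top_iff]
    intro f _
    have h := (hinv 0 0 (zero_mem _) f (by rw [hS₁]; trivial)).2.2.2.2.2.2.1
    simpa only [Gm, T_zero, one_mul] using h

end
end

section
/- Consider the module M_{0,0} (the case α = 0, b = 0), i.e., the operators L_m(f,g) = (t^m D f, t^m(D+m/2)g) and G_m(f,g) = (−t^m g, t^m D f) on W. Then: (i) the pair (ℂ·1, {0}) is invariant for M_{0,0}, and every operator L_m and G_m vanishes on ℂ·1 × {0}; (ii) every invariant pair (S₀,S₁) with ℂ·1 ⊆ S₀ and (S₀,S₁) ≠ (ℂ·1, {0}) satisfies S₀ = P and S₁ = P. In particular, the quotient M_t = (ℂ[t,t⁻¹] ⊕ ξℂ[t,t⁻¹]) / (ℂ ⊕ ξ0) is an irreducible module over the N=1 Ramond algebra. -/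
/- STATEMENT 9: For M_{0,0} (α = 0, b = 0), i.e. L_m(f,g) = (t^m D f, t^m(D+m/2)g),
G_m(f,g) = (−t^m g, t^m D f): (i) the pair (ℂ·1, {0}) is invariant and all operators
vanish on ℂ·1 × {0}; (ii) every invariant pair (S₀,S₁) with ℂ·1 ⊆ S₀ and
(S₀,S₁) ≠ (ℂ·1, {0}) satisfies S₀ = P and S₁ = P. In particular the quotient
M_t = (ℂ[t,t⁻¹] ⊕ ξℂ[t,t⁻¹])/(ℂ ⊕ ξ0) is an irreducible N=1 Ramond module. -/

open LaurentPolynomial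

noncomputable section

/-- The basis of monomials. -/
noncomputable def Bb : Module.Basis ℤ ℂ Lp := AddMonoidAlgebra.basis ℤ ℂ

lemma Bb_eq (n : ℤ) : Bb n = T n := rfl

lemma reprD (D : Lp →ₗ[ℂ] Lp) (hD : ∀ n : ℤ, D (T n) = (n : ℂ) • T n)
    (f : Lp) (k : ℤ) : Bb.repr (D f) k = (k:ℂ) * Bb.repr f k := by
  have : (Finsupp.lapply k ∘ₗ (Bb.repr.toLinearMap ∘ₗ D)) =
      (k:ℂ) • (Finsupp.lapply k ∘ₗ Bb.repr.toLinearMap) := by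
    refine Module.Basis.ext Bb fun n => ?_
    simp only [Bb_eq, LinearMap.coe_comp, Function.comp_apply, LinearEquiv.coe_coe,
      Finsupp.lapply_apply, LinearMap.smul_apply, smul_eq_mul, hD, map_smul,
      Finsupp.smul_apply]
    rw [← Bb_eq, Bb.repr_self]
    by_cases h : n = k <;> simp [h, Finsupp.single_apply]
  exact congrFun (congrArg DFunLike.coe this) f

lemma eq_smul_T (f : Lp) (n₀ : ℤ) (h : ∀ k, k ≠ n₀ → Bb.repr f k = 0) :
    f = (Bb.repr f n₀) • T n₀ := by
  apply Bb.repr.injective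
  rw [← Bb_eq, map_smul, Bb.repr_self]
  ext k
  by_cases hk : k = n₀
  · subst hk; simp
  · simp [Finsupp.single_apply, Ne.symm hk, h k hk]

lemma Dker (D : Lp →ₗ[ℂ] Lp) (hD : ∀ n : ℤ, D (T n) = (n : ℂ) • T n)
    (f : Lp) (h : D f = 0) : ∃ c : ℂ, f = c • 1 := by
  refine ⟨Bb.repr f 0, ?_⟩
  rw [← T_zero]
  apply eq_smul_T
  intro k hk
  have h1 : (k:ℂ) * Bb.repr f k = 0 := by rw [← reprD D hD, h]; simp
  rcases mul_eq_zero.mp h1 with h2 | h2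
  · exact absurd (by simpa using h2) hk
  · exact h2

lemma exists_T (D : Lp →ₗ[ℂ] Lp) (hD : ∀ n : ℤ, D (T n) = (n : ℂ) • T n)
    (S : Submodule ℂ Lp) (hDS : ∀ g ∈ S, D g ∈ S) :
    ∀ N : ℕ, ∀ g ∈ S, g ≠ 0 → (Bb.repr g).support.card ≤ N → ∃ n, T n ∈ S := by
  intro N
  induction N with
  | zero =>
    intro g hg hgne hcard
    exfalso
    apply hgne
    have : Bb.repr g = 0 := by
      rw [← Finsupp.support_eq_empty, ← Finset.card_eq_zero]
      omega
    simpa using Bb.repr.map_eq_zero_iff.mp this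
  | succ N ih =>
    intro g hg hgne hcard
    have hne : (Bb.repr g).support.Nonempty := by
      rw [Finsupp.support_nonempty_iff]
      simpa using (Bb.repr.map_ne_zero_iff).mpr hgne
    obtain ⟨n₀, hn₀⟩ := hne
    set h := D g - (n₀:ℂ) • g with hh
    have hhS : h ∈ S := S.sub_mem (hDS g hg) (S.smul_mem _ hg)
    have hrep : ∀ k, Bb.repr h k = ((k:ℂ) - n₀) * Bb.repr g k := by
      intro k
      rw [hh, map_sub, map_smul, Finsupp.sub_apply, Finsupp.smul_apply,
        reprD D hD, smul_eq_mul]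
      ring
    by_cases hzero : h = 0
    · have hk0 : ∀ k, k ≠ n₀ → Bb.repr g k = 0 := by
        intro k hk
        have h1 := hrep k
        rw [hzero] at h1
        simp only [map_zero, Finsupp.coe_zero, Pi.zero_apply] at h1
        rcases mul_eq_zero.mp h1.symm with h2 | h2
        · exact absurd (Int.cast_injective (by linear_combination h2)) hk
        · exact h2
      obtain ⟨c, hc0, heq⟩ : ∃ c : ℂ, c ≠ 0 ∧ g = c • T n₀ :=
        ⟨_, Finsupp.mem_support_iff.mp hn₀, eq_smul_T g n₀ hk0⟩
      refine ⟨n₀, ?_⟩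
      have hT : T n₀ = c⁻¹ • g := by
        rw [heq, smul_smul, inv_mul_cancel₀ hc0, one_smul]
      rw [hT]
      exact S.smul_mem _ hg
    · apply ih h hhS hzero
      have hsub : (Bb.repr h).support ⊂ (Bb.repr g).support := by
        constructor
        · intro k hk
          rw [Finsupp.mem_support_iff] at hk ⊢
          intro hgk
          exact hk (by rw [hrep k, hgk, mul_zero])
        · intro hsub'
          have : Bb.repr h n₀ = 0 := by rw [hrep n₀]; ring
          exact (Finsupp.mem_support_iff.mp (hsub' hn₀)) this
      have := Finset.card_lt_card hsub
      omega

lemma top_of_T (S : Submodule ℂ Lp) (hT : ∀ n : ℤ, T n ∈ S) : S = ⊤ := by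
  rw [Submodule.eq_top_iff']
  intro f
  rw [← Bb.linearCombination_repr f, Finsupp.linearCombination_apply]
  apply Submodule.finsuppSum_mem
  intro n _
  exact Submodule.smul_mem S _ (by rw [Bb_eq]; exact hT n)

lemma smul_mem_cancel (S : Submodule ℂ Lp) {c : ℂ} (hc : c ≠ 0) {x : Lp}
    (h : c • x ∈ S) : x ∈ S := by
  have := S.smul_mem c⁻¹ h
  rwa [smul_smul, inv_mul_cancel₀ hc, one_smul] at this

theorem stmt9 (D : Lp →ₗ[ℂ] Lp)
    (hD : ∀ n : ℤ, D (T n) = (n : ℂ) • T n) :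
    (RInv D 0 0 (Submodule.span ℂ {(1 : Lp)}) ⊥ ∧
      (∀ m : ℤ, ∀ f ∈ Submodule.span ℂ {(1 : Lp)},
        Lop D 0 0 m (f, 0) = 0 ∧ Gop D 0 0 m (f, 0) = 0)) ∧
    (∀ S₀ S₁ : Submodule ℂ Lp, RInv D 0 0 S₀ S₁ →
      Submodule.span ℂ {(1 : Lp)} ≤ S₀ →
      ¬(S₀ = Submodule.span ℂ {(1 : Lp)} ∧ S₁ = ⊥) →
      S₀ = ⊤ ∧ S₁ = ⊤) := by
  have hD1 : D 1 = 0 := by rw [← T_zero, hD]; simp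
  have hDspan : ∀ f ∈ Submodule.span ℂ {(1 : Lp)}, D f = 0 := by
    intro f hf
    obtain ⟨c, rfl⟩ := Submodule.mem_span_singleton.mp hf
    rw [map_smul, hD1, smul_zero]
  constructor
  · constructor
    · intro m f hf g hg
      obtain rfl : g = 0 := (Submodule.mem_bot ℂ).mp hg
      refine ⟨?_, ?_, ?_, ?_⟩ <;>
        simp [Lop, Gop, hDspan f hf]
    · intro m f hf
      constructor <;>
      · ext <;> simp [Lop, Gop, hDspan f hf]
  · intro S₀ S₁ hinv hle hne
    have h1 : (1 : Lp) ∈ S₀ := hle (Submodule.mem_span_singleton_self 1)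
    have hDS₁ : ∀ g ∈ S₁, D g ∈ S₁ := by
      intro g hg
      have := (hinv 0 1 h1 g hg).2.1
      simpa [Lop, T_zero] using this
    have hS₁ne : S₁ ≠ ⊥ := by
      intro hbot
      apply hne
      refine ⟨le_antisymm ?_ hle, hbot⟩
      intro f hf
      have h2 := (hinv 0 f hf 0 (Submodule.zero_mem _)).2.2.2
      rw [hbot] at h2
      simp only [Gop, T_zero, one_mul, Submodule.mem_bot] at h2
      have hDf : D f = 0 := by
        simpa using h2
      obtain ⟨c, rfl⟩ := Dker D hD f hDf
      exact Submodule.smul_mem _ _ (Submodule.mem_span_singleton_self 1)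
    obtain ⟨g, hg, hgne⟩ := (Submodule.ne_bot_iff S₁).mp hS₁ne
    obtain ⟨n, hTn⟩ := exists_T D hD S₁ hDS₁ (Bb.repr g).support.card g hg hgne le_rfl
    have shift : ∀ p : ℤ, T p ∈ S₁ → ∀ k : ℤ, k ≠ -p → T k ∈ S₁ := by
      intro p hp k hk
      have h2 := (hinv (k - p) 1 h1 (T p) hp).2.1
      have e : (Lop D 0 0 (k - p) ((1 : Lp), T p)).2 = (((p:ℂ) + k)/2) • T k := by
        simp only [Lop, zero_mul, zero_add, hD, Int.cast_sub]
        rw [← add_smul, mul_smul_comm, ← T_add, show k - p + p = k by ring]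
        congr 1
        ring
      rw [e] at h2
      have hc : ((p:ℂ) + k)/2 ≠ 0 := by
        rw [div_ne_zero_iff]
        refine ⟨?_, two_ne_zero⟩
        rw [show ((p:ℂ) + k) = ((p + k : ℤ) : ℂ) by push_cast; ring]
        have hpk : p + k ≠ 0 := by omega
        exact Int.cast_ne_zero.mpr hpk
      exact smul_mem_cancel S₁ hc h2
    have hall : ∀ k : ℤ, T k ∈ S₁ := by
      intro k
      by_cases h : k = -n
      · exact shift (n + 1) (shift n hTn (n + 1) (by omega)) k (by omega)
      · exact shift n hTn k h
    have hall0 : ∀ k : ℤ, T k ∈ S₀ := by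
      intro k
      have h2 := (hinv 0 1 h1 (T k) (hall k)).2.2.1
      simp only [Gop, T_zero, one_mul] at h2
      exact (Submodule.neg_mem_iff S₀).mp h2
    exact ⟨top_of_T S₀ hall0, top_of_T S₁ hall⟩


end
end
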